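/- The monoid of polytopes in ℝ^n under Minkowski sum has the cancellation property: if P, Q, R are polytopes in ℝ^n (convex hulls of finite sets) and P + Q = P + R as Minkowski sums, then Q = R. -/

import Mathlib

open Pointwise

/-- A polytope in `ℝ^n`: the convex hull of a nonempty finite subset of `ℝ^n`. -/
def IsPolytope {n : ℕ} (P : Set (Fin n → ℝ)) : Prop :=
  ∃ S : Finset (Fin n → ℝ), S.Nonempty ∧ P = convexHull ℝ (S : Set (Fin n → ℝ))

open Filter Topology in
lemma minkowski_cancel_aux {n : ℕ} {P Q R : Set (Fin n → ℝ)}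
    (hPne : P.Nonempty) (hPb : Bornology.IsBounded P)
    (hRc : Convex ℝ R) (hRcl : IsClosed R)
    (h : P + Q ⊆ P + R) : Q ⊆ R := by
  intro q hq
  have step : ∀ p : P, ∃ p' : P, ∃ r, r ∈ R ∧ (p : Fin n → ℝ) + q = (p' : Fin n → ℝ) + r := by
    rintro ⟨p, hp⟩
    have : p + q ∈ P + R := h (Set.add_mem_add hp hq)
    rw [Set.mem_add] at this
    obtain ⟨x, hx, y, hy, e⟩ := this
    exact ⟨⟨x, hx⟩, y, hy, e.symm⟩
  choose f r hr hrel using step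
  set p0 : P := ⟨hPne.choose, hPne.choose_spec⟩ with hp0
  set pk : ℕ → P := fun k => f^[k] p0 with hpk
  have key : ∀ k : ℕ, (p0 : Fin n → ℝ) + (k : ℝ) • q
      = (pk k : Fin n → ℝ) + ∑ i ∈ Finset.range k, r (pk i) := by
    intro k
    induction k with
    | zero => simp [hpk]
    | succ k ih =>
      have h1 : pk (k + 1) = f (pk k) := Function.iterate_succ_apply' f k p0
      rw [Finset.sum_range_succ, h1]
      have := hrel (pk k)
      push_cast
      rw [add_smul, one_smul, ← add_assoc, ih]
      rw [show (pk k : Fin n → ℝ) + ∑ i ∈ Finset.range k, r (pk i) + q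
          = ((pk k : Fin n → ℝ) + q) + ∑ i ∈ Finset.range k, r (pk i) by ring, this]
      ring
  -- averages
  set c : ℕ → (Fin n → ℝ) := fun k => (k : ℝ)⁻¹ • ∑ i ∈ Finset.range k, r (pk i) with hc
  have hcR : ∀ k : ℕ, 1 ≤ k → c k ∈ R := by
    intro k hk
    have hk0 : (0:ℝ) < (k:ℝ) := by exact_mod_cast hk
    have := hRc.sum_mem (t := Finset.range k) (w := fun _ => (k:ℝ)⁻¹)
      (z := fun i => r (pk i)) (fun i _ => by positivity)
      (by simp [Finset.sum_const, mul_inv_cancel₀ hk0.ne']) (fun i _ => hr (pk i))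
    simpa [hc, Finset.smul_sum] using this
  have hqc : ∀ k : ℕ, 1 ≤ k →
      q - c k = (k : ℝ)⁻¹ • ((pk k : Fin n → ℝ) - (p0 : Fin n → ℝ)) := by
    intro k hk
    have hk0 : (0:ℝ) < (k:ℝ) := by exact_mod_cast hk
    have e := key k
    have : (k : ℝ) • q = (pk k : Fin n → ℝ) - (p0 : Fin n → ℝ)
        + ∑ i ∈ Finset.range k, r (pk i) := by
      calc (k : ℝ) • q = ((p0 : Fin n → ℝ) + (k : ℝ) • q) - (p0 : Fin n → ℝ) := by abel
        _ = ((pk k : Fin n → ℝ) + ∑ i ∈ Finset.range k, r (pk i)) - (p0 : Fin n → ℝ) := by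
            rw [e]
        _ = _ := by abel
    rw [hc]
    have := congrArg (fun v => (k:ℝ)⁻¹ • v) this
    simp only [smul_smul, inv_mul_cancel₀ hk0.ne', one_smul, smul_add] at this
    rw [this]; ring
  -- bound
  obtain ⟨C, hC⟩ := Metric.isBounded_iff.mp hPb
  have hdist : ∀ k : ℕ, 1 ≤ k → dist (c k) q ≤ C * (k:ℝ)⁻¹ := by
    intro k hk
    have hk0 : (0:ℝ) < (k:ℝ) := by exact_mod_cast hk
    have : dist (c k) q = ‖q - c k‖ := by
      rw [dist_eq_norm, ← norm_neg]; congr 1; abel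
    rw [this, hqc k hk, norm_smul]
    have hb : ‖(pk k : Fin n → ℝ) - (p0 : Fin n → ℝ)‖ ≤ C := by
      have := hC (pk k).2 p0.2
      rwa [dist_eq_norm] at this
    calc ‖(k:ℝ)⁻¹‖ * ‖(pk k : Fin n → ℝ) - (p0 : Fin n → ℝ)‖
        ≤ (k:ℝ)⁻¹ * C := by
          rw [Real.norm_eq_abs, abs_of_pos (by positivity)]
          exact mul_le_mul_of_nonneg_left hb (by positivity)
      _ = C * (k:ℝ)⁻¹ := by ring
  have htend : Tendsto c atTop (𝓝 q) := by
    rw [tendsto_iff_dist_tendsto_zero]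
    apply squeeze_zero' (g := fun k : ℕ => C * (k:ℝ)⁻¹)
    · filter_upwards with k using dist_nonneg
    · filter_upwards [eventually_ge_atTop 1] with k hk using hdist k hk
    · have : Tendsto (fun k : ℕ => C * (k:ℝ)⁻¹) atTop (𝓝 (C * 0)) :=
        tendsto_const_nhds.mul tendsto_inv_atTop_nhds_zero_nat
      simpa using this
  exact hRcl.mem_of_tendsto htend (by
    filter_upwards [eventually_ge_atTop 1] with k hk using hcR k hk)

/-- The monoid of polytopes in `ℝ^n` under Minkowski sum has the cancellation
property. -/
theorem polytope_minkowski_cancel (n : ℕ) (P Q R : Set (Fin n → ℝ))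
    (hP : IsPolytope P) (hQ : IsPolytope Q) (hR : IsPolytope R)
    (h : P + Q = P + R) : Q = R := by
  obtain ⟨SP, hSPne, rfl⟩ := hP
  obtain ⟨SQ, hSQne, rfl⟩ := hQ
  obtain ⟨SR, hSRne, rfl⟩ := hR
  have compQ : IsCompact (convexHull ℝ (SQ : Set (Fin n → ℝ))) :=
    SQ.finite_toSet.isCompact_convexHull ℝ
  have compR : IsCompact (convexHull ℝ (SR : Set (Fin n → ℝ))) :=
    SR.finite_toSet.isCompact_convexHull ℝ
  have compP : IsCompact (convexHull ℝ (SP : Set (Fin n → ℝ))) :=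
    SP.finite_toSet.isCompact_convexHull ℝ
  have hPne : (convexHull ℝ (SP : Set (Fin n → ℝ))).Nonempty :=
    hSPne.to_set.mono (subset_convexHull ℝ _)
  apply subset_antisymm
  · exact minkowski_cancel_aux hPne compP.isBounded (convex_convexHull ℝ _)
      compR.isClosed h.subset
  · exact minkowski_cancel_aux hPne compP.isBounded (convex_convexHull ℝ _)
      compQ.isClosed h.superset
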